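/- Let C be a semisimple k-linear pivotal monoidal category. Then the Frobenius–Schur indicators are additive: ν_n(V ⊕ W) = ν_n(V) + ν_n(W) for all objects V, W of C and every n ≥ 1. -/

import Mathlib

open CategoryTheory MonoidalCategory Functor.LaxMonoidal Functor.OplaxMonoidal

namespace FSI

variable {C : Type*} [Category C] [MonoidalCategory C] [RightRigidCategory C]

/-- The adjunction isomorphism `A : C(I, V ⊗ W) → C(V^∨, W)`,
`A(f) = (ev_V ⊗ W) ∘ Φ⁻¹ ∘ (V^∨ ⊗ f)`. -/
def Amap (V W : C) (f : 𝟙_ C ⟶ V ⊗ W) : Vᘁ ⟶ W :=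
  (ρ_ (Vᘁ)).inv ≫ (Vᘁ ◁ f) ≫ (α_ (Vᘁ) V W).inv ≫ (ε_ V (Vᘁ) ▷ W) ≫ (λ_ W).hom

/-- The inverse of the adjunction isomorphism `A`, `A⁻¹(g) = (V ⊗ g) ∘ db_V`. -/
def Ainv (V W : C) (g : Vᘁ ⟶ W) : 𝟙_ C ⟶ V ⊗ W :=
  η_ V (Vᘁ) ≫ (V ◁ g)

/-- `B : C(V, W) → C(I, W ⊗ V^∨)`, `B(f) = (f ⊗ V^∨) ∘ db_V`. -/
def Bmap (V W : C) (f : V ⟶ W) : 𝟙_ C ⟶ W ⊗ (Vᘁ) :=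
  η_ V (Vᘁ) ≫ (f ▷ (Vᘁ))

/-- `T_{V,W} : C(V^∨, W) → C(W^∨, V)`, `T(g) = j_V⁻¹ ∘ g^∨`, defined relative to a chosen
isomorphism `j_V : V ≅ V^∨∨` (a component of a pivotal structure). -/
def Tmap {V W : C} (jV : V ≅ (Vᘁ)ᘁ) (g : Vᘁ ⟶ W) : Wᘁ ⟶ V :=
  gᘁ ≫ jV.inv

/-- `E_{V,W} = A⁻¹ ∘ T_{V,W} ∘ A : C(I, V ⊗ W) → C(I, W ⊗ V)`. -/
def Emap {V : C} (W : C) (jV : V ≅ (Vᘁ)ᘁ) (f : 𝟙_ C ⟶ V ⊗ W) : 𝟙_ C ⟶ W ⊗ V :=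
  Ainv W V (Tmap jV (Amap V W f))

/-- The `n`-fold tensor power with rightmost parenthesization:
`V^⊗0 = I`, `V^⊗(n+1) = V ⊗ V^⊗n`. -/
def pow (V : C) : ℕ → C
  | 0 => 𝟙_ C
  | n + 1 => V ⊗ pow V n

/-- The coherence isomorphism `Φ^(n+1) : V^⊗n ⊗ V ⟶ V^⊗(n+1)` built from associators
(and unitors). -/
def PhiN (V : C) : ∀ n : ℕ, pow V n ⊗ V ⟶ pow V (n + 1)
  | 0 => (λ_ V).hom ≫ (ρ_ V).inv
  | n + 1 => (α_ V (pow V n) V).hom ≫ (V ◁ PhiN V n)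

/-- `E_V^(n+1) = C(I, Φ^(n+1)) ∘ E_{V, V^⊗n} : C(I, V^⊗(n+1)) → C(I, V^⊗(n+1))`.
Here `jj` is the family of components of a pivotal structure. -/
def EN (jj : ∀ X : C, X ≅ (Xᘁ)ᘁ) (V : C) (n : ℕ)
    (f : 𝟙_ C ⟶ pow V (n + 1)) : 𝟙_ C ⟶ pow V (n + 1) :=
  Emap (pow V n) (jj V) f ≫ PhiN V n

/-- The canonical evaluation exhibiting `Y^∨ ⊗ X^∨` as a dual of `X ⊗ Y`. -/
def tildeEv (X Y : C) : ((Yᘁ) ⊗ (Xᘁ)) ⊗ (X ⊗ Y) ⟶ 𝟙_ C :=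
  (α_ (Yᘁ) (Xᘁ) (X ⊗ Y)).hom ≫
    ((Yᘁ) ◁ ((α_ (Xᘁ) X Y).inv ≫ (ε_ X (Xᘁ) ▷ Y) ≫ (λ_ Y).hom)) ≫ ε_ Y (Yᘁ)

/-- The canonical isomorphism `ζ : Y^∨ ⊗ X^∨ ⟶ (X ⊗ Y)^∨` making the duality functor
monoidal; it is the unique morphism with `ev_{X⊗Y} ∘ (ζ ⊗ (X⊗Y)) = tildeEv`. -/
def zeta (X Y : C) : (Yᘁ) ⊗ (Xᘁ) ⟶ (X ⊗ Y)ᘁ :=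
  (ρ_ ((Yᘁ) ⊗ (Xᘁ))).inv ≫ (((Yᘁ) ⊗ (Xᘁ)) ◁ η_ (X ⊗ Y) ((X ⊗ Y)ᘁ)) ≫
    (α_ ((Yᘁ) ⊗ (Xᘁ)) (X ⊗ Y) ((X ⊗ Y)ᘁ)).inv ≫
      (tildeEv X Y ▷ ((X ⊗ Y)ᘁ)) ≫ (λ_ ((X ⊗ Y)ᘁ)).hom

/-- A pivotal structure on a rigid monoidal category: a monoidal natural isomorphism
`j : Id → (−)^∨∨`. -/
structure Pivotal (C : Type*) [Category C] [MonoidalCategory C] [RightRigidCategory C] where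
  j : ∀ X : C, X ≅ (Xᘁ)ᘁ
  naturality : ∀ {X Y : C} (f : X ⟶ Y), f ≫ (j Y).hom = (j X).hom ≫ (fᘁ)ᘁ
  monoidality : ∀ X Y : C,
    ((j X).hom ⊗ₘ (j Y).hom) ≫ zeta (Yᘁ) (Xᘁ) = (j (X ⊗ Y)).hom ≫ (zeta X Y)ᘁ

/-- The categorical trace `ctr(a) = ev_{V^∨} ∘ (a ⊗ V^∨) ∘ db_V ∈ End(I)` of a morphism
`a : V ⟶ V^∨∨`. -/
def ctr {V : C} (a : V ⟶ (Vᘁ)ᘁ) : 𝟙_ C ⟶ 𝟙_ C :=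
  η_ V (Vᘁ) ≫ (a ▷ (Vᘁ)) ≫ ε_ (Vᘁ) ((Vᘁ)ᘁ)

/-- The left pivotal trace `ptr_l(f) = ev_V ∘ (V^∨ ⊗ (f ∘ j_V⁻¹)) ∘ db_{V^∨}`. -/
def ptrl (jj : ∀ X : C, X ≅ (Xᘁ)ᘁ) {V : C} (f : V ⟶ V) : 𝟙_ C ⟶ 𝟙_ C :=
  η_ (Vᘁ) ((Vᘁ)ᘁ) ≫ ((Vᘁ) ◁ ((jj V).inv ≫ f)) ≫ ε_ V (Vᘁ)

/-- The right pivotal trace `ptr_r(f) = ev_{V^∨} ∘ ((j_V ∘ f) ⊗ V^∨) ∘ db_V`. -/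
def ptrr (jj : ∀ X : C, X ≅ (Xᘁ)ᘁ) {V : C} (f : V ⟶ V) : 𝟙_ C ⟶ 𝟙_ C :=
  η_ V (Vᘁ) ≫ ((f ≫ (jj V).hom) ▷ (Vᘁ)) ≫ ε_ (Vᘁ) ((Vᘁ)ᘁ)

/-- A pivotal category is *spherical* if left and right pivotal traces agree. -/
def Spherical (jj : ∀ X : C, X ≅ (Xᘁ)ᘁ) : Prop :=
  ∀ (V : C) (f : V ⟶ V), ptrl jj f = ptrr jj f

section LinearDefs

variable (k : Type*) [Field k] [Preadditive C] [CategoryTheory.Linear k C]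
  [MonoidalPreadditive C] [MonoidalLinear k C]

set_option maxHeartbeats 2000000 in
/-- `E_V^(n+1)` as a linear endomorphism of the Hom space `C(I, V^⊗(n+1))`. -/
def ENlin (jj : ∀ X : C, X ≅ (Xᘁ)ᘁ) (V : C) (n : ℕ) :
    Module.End k (𝟙_ C ⟶ pow V (n + 1)) where
  toFun := EN jj V n
  map_add' f g := by
    have key : ∀ (W : C) (a b : 𝟙_ C ⟶ V ⊗ W),
        Emap W (jj V) (a + b) = Emap W (jj V) a + Emap W (jj V) b := by
      intro W a b
      simp [Emap, Ainv, Tmap, Amap, rightAdjointMate,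
        MonoidalPreadditive.whiskerLeft_add, MonoidalPreadditive.add_whiskerRight,
        Preadditive.comp_add, Preadditive.add_comp]
    exact (congrArg (· ≫ PhiN V n) (key (pow V n) f g)).trans (Preadditive.add_comp _ _ _ _ _ _)
  map_smul' c f := by
    have key : ∀ (W : C) (a : 𝟙_ C ⟶ V ⊗ W),
        Emap W (jj V) (c • a) = c • Emap W (jj V) a := by
      intro W a
      simp [Emap, Ainv, Tmap, Amap, rightAdjointMate,
        MonoidalLinear.whiskerLeft_smul, MonoidalLinear.smul_whiskerRight,
        CategoryTheory.Linear.comp_smul, CategoryTheory.Linear.smul_comp]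
    exact (congrArg (· ≫ PhiN V n) (key (pow V n) f)).trans
      (CategoryTheory.Linear.smul_comp _ _ _ _ _ _)

/-- The `(n, r)`-th Frobenius–Schur indicator `ν_{n,r}(V) = Tr((E_V^(n))^r)` of an object `V`
of a `k`-linear pivotal monoidal category (with pivotal structure components `jj`). -/
noncomputable def nu (jj : ∀ X : C, X ≅ (Xᘁ)ᘁ) (V : C) (n r : ℕ) : k :=
  LinearMap.trace k _ ((ENlin k jj V (n - 1)) ^ r)

end LinearDefs

section SemisimpleDefs

variable (k : Type*) [Field k]

/-- An object of a `k`-linear category is *simple* if its endomorphism ring is `k`. -/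
def IsSimpleObj {C : Type*} [Category C] [Preadditive C] [CategoryTheory.Linear k C]
    (X : C) : Prop :=
  𝟙 X ≠ 0 ∧ ∀ f : X ⟶ X, ∃ c : k, f = c • 𝟙 X

/-- A `k`-linear monoidal category is *semisimple* if every object is a finite direct sum
of simple objects. -/
def SemisimpleCat (C : Type*) [Category C] [Preadditive C] [CategoryTheory.Linear k C] : Prop :=
  ∀ X : C, ∃ (n : ℕ) (s : Fin n → C) (a : ∀ i, s i ⟶ X) (b : ∀ i, X ⟶ s i),
    (∀ i, IsSimpleObj k (s i)) ∧ (∀ i, a i ≫ b i = 𝟙 (s i)) ∧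
      (∀ i j, i ≠ j → a i ≫ b j = 0) ∧ (∑ i, b i ≫ a i) = 𝟙 X

/-- An object is *trivial* if it is (isomorphic to) a finite direct sum of copies of the
unit object. -/
def IsTrivial {C : Type*} [Category C] [MonoidalCategory C] [Preadditive C] (T : C) : Prop :=
  ∃ (n : ℕ) (a : Fin n → (𝟙_ C ⟶ T)) (b : Fin n → (T ⟶ 𝟙_ C)),
    (∀ i j, a i ≫ b j = if i = j then 𝟙 (𝟙_ C) else 0) ∧ (∑ i, b i ≫ a i) = 𝟙 T

/-- A trivial (`I`-isotypical) component of an object `V`: a retract `(T, ι, π)` of `V`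
with `T` trivial such that `ι ∘ π` is the idempotent of `V` projecting onto the
`I`-isotypical summand. -/
structure TrivialComponent {C : Type*} [Category C] [MonoidalCategory C] [Preadditive C]
    (V : C) where
  T : C
  ι : T ⟶ V
  π : V ⟶ T
  trivial : IsTrivial T
  retract : ι ≫ π = 𝟙 T
  fac_from : ∀ g : 𝟙_ C ⟶ V, g ≫ π ≫ ι = g
  fac_to : ∀ p : V ⟶ 𝟙_ C, π ≫ ι ≫ p = p

/-- The canonical exchange isomorphisms `τ_{V,T} : V ⊗ T ⟶ T ⊗ V` for `T` trivial:
the unique family natural in `V` and in trivial `T` with `τ_{V,I}` the canonical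
isomorphism. -/
structure TrivialExchange (C : Type*) [Category C] [MonoidalCategory C] [Preadditive C] where
  τ : ∀ V T : C, V ⊗ T ⟶ T ⊗ V
  iso : ∀ V T : C, IsTrivial T → IsIso (τ V T)
  natV : ∀ {V V' : C} (f : V ⟶ V') (T : C), IsTrivial T →
    (f ▷ T) ≫ τ V' T = τ V T ≫ (T ◁ f)
  natT : ∀ (V : C) {T T' : C} (g : T ⟶ T'), IsTrivial T → IsTrivial T' →
    (V ◁ g) ≫ τ V T' = τ V T ≫ (g ▷ V)
  unit : ∀ V : C, τ V (𝟙_ C) = (ρ_ V).hom ≫ (λ_ V).inv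

end SemisimpleDefs

/-! ### Auxiliary development for additivity -/

section AuxMor

lemma Amap_eq (V W : C) (f : 𝟙_ C ⟶ V ⊗ W) :
    Amap V W f = (ρ_ (Vᘁ)).inv ≫ (tensorLeftHomEquiv (𝟙_ C) V (Vᘁ) W).symm f := rfl

lemma Ainv_eq (V W : C) (g : Vᘁ ⟶ W) :
    Ainv V W g = (tensorLeftHomEquiv (𝟙_ C) V (Vᘁ) W) ((ρ_ (Vᘁ)).hom ≫ g) := by
  dsimp [Ainv, tensorLeftHomEquiv]
  simp [← unitors_equal]

lemma Ainv_Amap (V W : C) (f : 𝟙_ C ⟶ V ⊗ W) : Ainv V W (Amap V W f) = f := by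
  rw [Ainv_eq, Amap_eq, Iso.hom_inv_id_assoc, Equiv.apply_symm_apply]

lemma Ainv_injective (V W : C) : Function.Injective (Ainv V W) := by
  intro g h hg
  rw [Ainv_eq, Ainv_eq] at hg
  have := (tensorLeftHomEquiv (𝟙_ C) V (Vᘁ) W).injective hg
  simpa using congrArg (fun t => (ρ_ (Vᘁ)).inv ≫ t) this

lemma Ainv_nat {X Y U V' : C} (g : X ⟶ Y) (t : Xᘁ ⟶ U) (a : U ⟶ V') :
    Ainv Y V' (gᘁ ≫ t ≫ a) = Ainv X U t ≫ (g ⊗ₘ a) := by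
  dsimp [Ainv]
  rw [MonoidalCategory.whiskerLeft_comp, MonoidalCategory.whiskerLeft_comp,
    coevaluation_comp_rightAdjointMate_assoc]
  rw [MonoidalCategory.tensorHom_def]
  slice_lhs 2 3 => rw [← whisker_exchange]
  simp

lemma Tmap_nat {V Z X Y : C} (a : V ⟶ Z) (g : X ⟶ Y)
    (jV : V ≅ (Vᘁ)ᘁ) (jZ : Z ≅ (Zᘁ)ᘁ) (hnat : a ≫ jZ.hom = jV.hom ≫ (aᘁ)ᘁ)
    (t : Vᘁ ⟶ X) :
    Tmap jZ (aᘁ ≫ t ≫ g) = gᘁ ≫ Tmap jV t ≫ a := by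
  have h2 : ((aᘁ)ᘁ) ≫ jZ.inv = jV.inv ≫ a := by
    rw [Iso.comp_inv_eq]
    rw [Category.assoc, hnat, Iso.inv_hom_id_assoc]
  dsimp [Tmap]
  rw [comp_rightAdjointMate, comp_rightAdjointMate]
  simp [h2]

lemma Emap_nat {V Z X Y : C} (a : V ⟶ Z) (g : X ⟶ Y)
    (jV : V ≅ (Vᘁ)ᘁ) (jZ : Z ≅ (Zᘁ)ᘁ) (hnat : a ≫ jZ.hom = jV.hom ≫ (aᘁ)ᘁ)
    (f : 𝟙_ C ⟶ V ⊗ X) :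
    Emap Y jZ (f ≫ (a ⊗ₘ g)) = Emap X jV f ≫ (g ⊗ₘ a) := by
  have hA : Amap Z Y (f ≫ (a ⊗ₘ g)) = aᘁ ≫ Amap V X f ≫ g := by
    apply Ainv_injective
    rw [Ainv_Amap, Ainv_nat, Ainv_Amap]
  dsimp only [Emap]
  rw [hA, Tmap_nat a g jV jZ hnat, Ainv_nat]

end AuxMor

section PowAux

/-- Tensor power of a morphism. -/
def powHom {V Z : C} (a : V ⟶ Z) : ∀ m : ℕ, pow V m ⟶ pow Z m
  | 0 => 𝟙 _
  | m + 1 => a ⊗ₘ powHom a m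

@[simp] lemma powHom_id (V : C) : ∀ m : ℕ, powHom (𝟙 V) m = 𝟙 (pow V m)
  | 0 => rfl
  | m + 1 => by
      show 𝟙 V ⊗ₘ powHom (𝟙 V) m = _
      rw [powHom_id V m, id_tensorHom_id]
      rfl

lemma powHom_comp {V Z U : C} (a : V ⟶ Z) (b : Z ⟶ U) :
    ∀ m : ℕ, powHom (a ≫ b) m = powHom a m ≫ powHom b m
  | 0 => by simp [powHom]; exact (Category.comp_id _).symm
  | m + 1 => by
      show (a ≫ b) ⊗ₘ powHom (a ≫ b) m = (a ⊗ₘ powHom a m) ≫ (b ⊗ₘ powHom b m)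
      rw [powHom_comp a b m, tensorHom_comp_tensorHom]

lemma PhiN_nat {V Z : C} (a : V ⟶ Z) : ∀ m : ℕ,
    (powHom a m ⊗ₘ a) ≫ PhiN Z m = PhiN V m ≫ powHom a (m + 1)
  | 0 => by
      show (𝟙 (𝟙_ C) ⊗ₘ a) ≫ ((λ_ Z).hom ≫ (ρ_ Z).inv)
          = ((λ_ V).hom ≫ (ρ_ V).inv) ≫ (a ⊗ₘ 𝟙 (𝟙_ C))
      simp
  | m + 1 => by
      show ((a ⊗ₘ powHom a m) ⊗ₘ a) ≫ (α_ Z (pow Z m) Z).hom ≫ (Z ◁ PhiN Z m)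
          = ((α_ V (pow V m) V).hom ≫ (V ◁ PhiN V m)) ≫ (a ⊗ₘ powHom a (m + 1))
      rw [associator_naturality_assoc a (powHom a m) a, Category.assoc]
      congr 1
      rw [← id_tensorHom, ← id_tensorHom, tensorHom_comp_tensorHom, tensorHom_comp_tensorHom, PhiN_nat a m]
      simp

/-- The endomorphism of `pow Z m` acting by `e` in the `j`-th slot. -/
def slotE {Z : C} (e : Z ⟶ Z) : ∀ m : ℕ, ℕ → (pow Z m ⟶ pow Z m)
  | 0, _ => 𝟙 _
  | m + 1, 0 => e ▷ pow Z m
  | m + 1, j + 1 => Z ◁ slotE e m j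

lemma slotE_comp {Z : C} (e e' : Z ⟶ Z) : ∀ (m j : ℕ),
    slotE e m j ≫ slotE e' m j = slotE (e ≫ e') m j
  | 0, _ => by simp [slotE]
  | m + 1, 0 => by simp [slotE]; rfl
  | m + 1, j + 1 => by
      show (Z ◁ slotE e m j) ≫ (Z ◁ slotE e' m j) = Z ◁ slotE (e ≫ e') m j
      rw [← MonoidalCategory.whiskerLeft_comp, slotE_comp e e' m j]

@[simp] lemma slotE_id (Z : C) : ∀ (m j : ℕ), slotE (𝟙 Z) m j = 𝟙 (pow Z m)
  | 0, _ => rfl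
  | m + 1, 0 => by
      show 𝟙 Z ▷ pow Z m = _
      rw [id_whiskerRight]; rfl
  | m + 1, j + 1 => by
      show Z ◁ slotE (𝟙 Z) m j = _
      rw [slotE_id Z m j, MonoidalCategory.whiskerLeft_id]; rfl

lemma PhiN_slot_lt {Z : C} (e : Z ⟶ Z) : ∀ (n j : ℕ), j < n →
    (slotE e n j ▷ Z) ≫ PhiN Z n = PhiN Z n ≫ slotE e (n + 1) j
  | 0, j, h => absurd h (Nat.not_lt_zero j)
  | n + 1, 0, _ => by
      show ((e ▷ pow Z n) ▷ Z) ≫ (α_ Z (pow Z n) Z).hom ≫ (Z ◁ PhiN Z n)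
          = ((α_ Z (pow Z n) Z).hom ≫ (Z ◁ PhiN Z n)) ≫ (e ▷ pow Z (n + 1))
      rw [associator_naturality_left_assoc e (pow Z n) Z, ← whisker_exchange]
      simp
  | n + 1, j + 1, h => by
      have h' : j < n := Nat.lt_of_succ_lt_succ h
      show ((Z ◁ slotE e n j) ▷ Z) ≫ (α_ Z (pow Z n) Z).hom ≫ (Z ◁ PhiN Z n)
          = ((α_ Z (pow Z n) Z).hom ≫ (Z ◁ PhiN Z n)) ≫ (Z ◁ slotE e (n + 1) j)
      rw [associator_naturality_middle_assoc Z (slotE e n j) Z,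
        ← MonoidalCategory.whiskerLeft_comp, PhiN_slot_lt e n j h']
      simp [MonoidalCategory.whiskerLeft_comp]

/-- Partial products `slot 0 ≫ slot 1 ≫ ⋯ ≫ slot j`. -/
def fprod {Z : C} (e : Z ⟶ Z) : ∀ (m : ℕ), ℕ → (pow Z m ⟶ pow Z m)
  | 0, _ => 𝟙 _
  | m + 1, 0 => slotE e (m + 1) 0
  | m + 1, j + 1 => slotE e (m + 1) 0 ≫ (Z ◁ fprod e m j)

@[simp] lemma fprod_zero {Z : C} (e : Z ⟶ Z) : ∀ m : ℕ, fprod e m 0 = slotE e m 0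
  | 0 => rfl
  | m + 1 => rfl

lemma fprod_succ {Z : C} (e : Z ⟶ Z) : ∀ (m j : ℕ),
    fprod e m (j + 1) = fprod e m j ≫ slotE e m (j + 1)
  | 0, _ => by simp [fprod, slotE]
  | m + 1, 0 => by
      show slotE e (m + 1) 0 ≫ (Z ◁ fprod e m 0) = slotE e (m + 1) 0 ≫ (Z ◁ slotE e m 0)
      rw [fprod_zero]
  | m + 1, j + 1 => by
      show slotE e (m + 1) 0 ≫ (Z ◁ fprod e m (j + 1))
          = (slotE e (m + 1) 0 ≫ (Z ◁ fprod e m j)) ≫ (Z ◁ slotE e m (j + 1))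
      erw [fprod_succ e m j, MonoidalCategory.whiskerLeft_comp, Category.assoc]
      rfl

lemma slot_absorb {Z : C} (e : Z ⟶ Z) (he : e ≫ e = e) : ∀ (m j i : ℕ), i ≤ j →
    slotE e m i ≫ fprod e m j = fprod e m j
  | 0, _, _, _ => by simp [fprod, slotE]
  | m + 1, 0, i, hi => by
      obtain rfl : i = 0 := Nat.le_zero.mp hi
      show slotE e (m + 1) 0 ≫ fprod e (m + 1) 0 = fprod e (m + 1) 0
      rw [fprod_zero, slotE_comp, he]
  | m + 1, j + 1, 0, _ => by
      show slotE e (m + 1) 0 ≫ (slotE e (m + 1) 0 ≫ (Z ◁ fprod e m j)) = _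
      erw [← Category.assoc, slotE_comp, he]
      rfl
  | m + 1, j + 1, i + 1, hi => by
      have hi' : i ≤ j := Nat.le_of_succ_le_succ hi
      show (Z ◁ slotE e m i) ≫ (e ▷ pow Z m ≫ (Z ◁ fprod e m j)) = _
      rw [← Category.assoc, whisker_exchange, Category.assoc,
        ← MonoidalCategory.whiskerLeft_comp, slot_absorb e he m j i hi']
      rfl

lemma fprod_absorb {Z : C} (e : Z ⟶ Z) (he : e ≫ e = e) : ∀ (m j : ℕ),
    fprod e m j ≫ fprod e m (j + 1) = fprod e m (j + 1)
  | 0, _ => by simp [fprod]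
  | m + 1, 0 => by
      rw [fprod_zero]
      exact slot_absorb e he (m + 1) 1 0 (Nat.zero_le 1)
  | m + 1, j + 1 => by
      show (e ▷ pow Z m ≫ (Z ◁ fprod e m j)) ≫ (e ▷ pow Z m ≫ (Z ◁ fprod e m (j + 1)))
          = e ▷ pow Z m ≫ (Z ◁ fprod e m (j + 1))
      rw [Category.assoc, ← Category.assoc (Z ◁ fprod e m j), whisker_exchange e (fprod e m j),
        Category.assoc, ← MonoidalCategory.whiskerLeft_comp, fprod_absorb e he m j,
        ← Category.assoc, ← comp_whiskerRight, he]

lemma fprod_shift_absorb {Z : C} (e : Z ⟶ Z) (he : e ≫ e = e) : ∀ (m j : ℕ),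
    fprod e (m + 1) j ≫ (Z ◁ fprod e m j) = fprod e (m + 1) (j + 1)
  | m, 0 => by rw [fprod_zero]; rfl
  | m, j + 1 => by
      show (slotE e (m + 1) 0 ≫ (Z ◁ fprod e m j)) ≫ (Z ◁ fprod e m (j + 1)) = _
      erw [Category.assoc, ← MonoidalCategory.whiskerLeft_comp, fprod_absorb e he m j]
      rfl

lemma fprod_last {Z : C} (e : Z ⟶ Z) : ∀ m : ℕ, fprod e (m + 1) m = powHom e (m + 1)
  | 0 => by
      show slotE e 1 0 = e ⊗ₘ powHom e 0
      show e ▷ pow Z 0 = e ⊗ₘ 𝟙 (pow Z 0)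
      rw [tensorHom_id]
  | m + 1 => by
      show slotE e (m + 2) 0 ≫ (Z ◁ fprod e (m + 1) m) = e ⊗ₘ powHom e (m + 1)
      rw [fprod_last e m, MonoidalCategory.tensorHom_def]
      rfl

end PowAux

section ENRel

lemma EN_slot_succ (jj : ∀ X : C, X ≅ (Xᘁ)ᘁ) {Z : C} (e : Z ⟶ Z) (n j : ℕ) (hj : j < n)
    (f : 𝟙_ C ⟶ pow Z (n + 1)) :
    EN jj Z n (f ≫ slotE e (n + 1) (j + 1)) = EN jj Z n f ≫ slotE e (n + 1) j := by
  have hid : (𝟙 Z) ≫ (jj Z).hom = (jj Z).hom ≫ (((𝟙 Z)ᘁ)ᘁ) := by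
    simp [rightAdjointMate_id]
  have h1 : slotE e (n + 1) (j + 1) = 𝟙 Z ⊗ₘ slotE e n j := by
    rw [id_tensorHom]; rfl
  dsimp only [EN]
  erw [h1, Emap_nat (𝟙 Z) (slotE e n j) (jj Z) (jj Z) hid f, tensorHom_id,
    Category.assoc, PhiN_slot_lt e n j hj]
  simp

lemma EN_fprod_shift (jj : ∀ X : C, X ≅ (Xᘁ)ᘁ) {Z : C} (e : Z ⟶ Z) (n : ℕ) :
    ∀ j, j < n → ∀ f : 𝟙_ C ⟶ pow Z (n + 1),
      EN jj Z n f ≫ fprod e (n + 1) j = EN jj Z n (f ≫ (Z ◁ fprod e n j))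
  | 0, h, f => by
      have h1 : Z ◁ fprod e n 0 = slotE e (n + 1) 1 := by rw [fprod_zero]; rfl
      rw [h1, EN_slot_succ jj e n 0 h f, fprod_zero]
  | j + 1, h, f => by
      have hj : j < n := Nat.lt_of_succ_lt h
      rw [fprod_succ e (n + 1) j, ← Category.assoc,
        EN_fprod_shift jj e n j hj f, ← EN_slot_succ jj e n (j + 1) h]
      congr 1
      have h2 : slotE e (n + 1) (j + 2) = Z ◁ slotE e n (j + 1) := rfl
      erw [Category.assoc, h2, ← MonoidalCategory.whiskerLeft_comp, ← fprod_succ]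

lemma EN_restrict (jj : ∀ X : C, X ≅ (Xᘁ)ᘁ) {V Z : C} (a : V ⟶ Z) (b : Z ⟶ V)
    (hab : a ≫ b = 𝟙 V) (hnat : a ≫ (jj Z).hom = (jj V).hom ≫ ((aᘁ)ᘁ)) (n : ℕ)
    (f : 𝟙_ C ⟶ pow V (n + 1)) :
    EN jj Z n (f ≫ powHom a (n + 1)) ≫ powHom b (n + 1) = EN jj V n f := by
  have h1 : powHom a (n + 1) = a ⊗ₘ powHom a n := rfl
  dsimp only [EN]
  erw [h1, Emap_nat a (powHom a n) (jj V) (jj Z) hnat f]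
  simp only [Category.assoc]
  rw [reassoc_of% (PhiN_nat a n), ← powHom_comp a b (n + 1), hab, powHom_id]
  simp

end ENRel

lemma fprod_idem {Z : C} (e : Z ⟶ Z) (he : e ≫ e = e) : ∀ (m j : ℕ),
    fprod e m j ≫ fprod e m j = fprod e m j
  | 0, _ => by simp [fprod]
  | m + 1, 0 => by rw [fprod_zero, slotE_comp, he]
  | m + 1, j + 1 => by
      show (e ▷ pow Z m ≫ (Z ◁ fprod e m j)) ≫ (e ▷ pow Z m ≫ (Z ◁ fprod e m j))
          = e ▷ pow Z m ≫ (Z ◁ fprod e m j)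
      rw [Category.assoc, ← Category.assoc (Z ◁ fprod e m j), whisker_exchange e (fprod e m j),
        Category.assoc, ← MonoidalCategory.whiskerLeft_comp, fprod_idem e he m j,
        ← Category.assoc, ← comp_whiskerRight, he]

section LinTrace

variable (k : Type*) [Field k] [Preadditive C] [CategoryTheory.Linear k C]
  [MonoidalPreadditive C] [MonoidalLinear k C]

/-- Postcomposition with a fixed morphism, as a linear map on `Hom(I, -)`. -/
def pcx {X Y : C} (g : X ⟶ Y) : (𝟙_ C ⟶ X) →ₗ[k] (𝟙_ C ⟶ Y) :=
  CategoryTheory.Linear.rightComp k (𝟙_ C) g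

/-- Postcomposition with a fixed endomorphism, as a linear endomorphism. -/
def pcE {X : C} (g : X ⟶ X) : Module.End k (𝟙_ C ⟶ X) := pcx k g

@[simp] lemma pcx_apply {X Y : C} (g : X ⟶ Y) (f : 𝟙_ C ⟶ X) : pcx k g f = f ≫ g := rfl

@[simp] lemma pcE_apply {X : C} (g : X ⟶ X) (f : 𝟙_ C ⟶ X) : pcE k g f = f ≫ g := rfl

@[simp] lemma ENlin_apply (jj : ∀ X : C, X ≅ (Xᘁ)ᘁ) (V : C) (n : ℕ)
    (f : 𝟙_ C ⟶ pow V (n + 1)) : ENlin k jj V n f = EN jj V n f := rfl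

lemma pcE_mul {X : C} (g h : X ⟶ X) : pcE k g * pcE k h = pcE k (h ≫ g) := by
  apply LinearMap.ext; intro f
  simp [Module.End.mul_apply]

lemma pcE_id (X : C) : pcE k (𝟙 X) = 1 := by
  apply LinearMap.ext; intro f; simp [pcE, pcx]

lemma pcE_add {X : C} (g h : X ⟶ X) : pcE k (g + h) = pcE k g + pcE k h := by
  apply LinearMap.ext; intro f
  simp [Preadditive.comp_add]

lemma trace_component [∀ X Y : C, FiniteDimensional k (X ⟶ Y)]
    (jj : ∀ X : C, X ≅ (Xᘁ)ᘁ) {V Z : C} (a : V ⟶ Z) (b : Z ⟶ V)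
    (hab : a ≫ b = 𝟙 V)
    (hnat : a ≫ (jj Z).hom = (jj V).hom ≫ ((aᘁ)ᘁ)) (n : ℕ) :
    LinearMap.trace k _ (ENlin k jj Z n * pcE k (slotE (b ≫ a) (n + 1) 0)) =
      LinearMap.trace k _ (ENlin k jj V n) := by
  set e : Z ⟶ Z := b ≫ a with hedef
  have he : e ≫ e = e := by
    rw [hedef, Category.assoc, reassoc_of% hab]
  set L : Module.End k (𝟙_ C ⟶ pow Z (n + 1)) := ENlin k jj Z n with hL
  have step : ∀ j, j < n →
      LinearMap.trace k _ (L * pcE k (fprod e (n + 1) j)) =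
        LinearMap.trace k _ (L * pcE k (fprod e (n + 1) (j + 1))) := by
    intro j hjn
    set F : Module.End k (𝟙_ C ⟶ pow Z (n + 1)) := pcE k (fprod e (n + 1) j) with hF
    have hshift : F * L =
        L * (pcE k (Z ◁ fprod e n j) : Module.End k (𝟙_ C ⟶ pow Z (n + 1))) := by
      apply LinearMap.ext; intro f
      exact (EN_fprod_shift jj e n j hjn f)
    have hFF : F * F = F := by
      rw [hF, pcE_mul, fprod_idem e he (n + 1) j]
    calc LinearMap.trace k _ (L * F)
        = LinearMap.trace k _ ((L * F) * F) := by rw [mul_assoc, hFF]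
      _ = LinearMap.trace k _ (F * (L * F)) := LinearMap.trace_mul_comm k (L * F) F
      _ = LinearMap.trace k _
            ((L * (pcE k (Z ◁ fprod e n j) : Module.End k (𝟙_ C ⟶ pow Z (n + 1)))) * F) := by
          rw [← mul_assoc, hshift]
      _ = LinearMap.trace k _ (L * pcE k (fprod e (n + 1) (j + 1))) := by
          erw [mul_assoc, hF, pcE_mul, fprod_shift_absorb e he n j]
  have htel : ∀ j, j ≤ n →
      LinearMap.trace k _ (L * pcE k (fprod e (n + 1) 0)) =
        LinearMap.trace k _ (L * pcE k (fprod e (n + 1) j)) := by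
    intro j hjn
    induction j with
    | zero => rfl
    | succ i ih =>
        rw [ih (Nat.le_of_succ_le hjn), step i (Nat.lt_of_succ_le hjn)]
  have hmain := htel n le_rfl
  rw [fprod_zero, fprod_last] at hmain
  rw [hmain]
  have hdecomp : L * pcE k (powHom e (n + 1))
      = (L ∘ₗ pcx k (powHom a (n + 1))) ∘ₗ pcx k (powHom b (n + 1)) := by
    apply LinearMap.ext; intro f
    simp only [Module.End.mul_apply, LinearMap.comp_apply, pcE_apply, pcx_apply]
    rw [hedef, powHom_comp, Category.assoc]
  rw [hdecomp, ← LinearMap.trace_comp_comm' (L ∘ₗ pcx k (powHom a (n + 1)))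
    (pcx k (powHom b (n + 1)))]
  congr 1
  apply LinearMap.ext; intro f
  simpa [hL] using EN_restrict jj a b hab hnat n f

end LinTrace

/-- Frobenius–Schur indicators are additive:
`ν_n(V ⊕ W) = ν_n(V) + ν_n(W)` (here `Z` together with the given data is a biproduct of
`V` and `W`; stated for `n + 1`, i.e. all `n ≥ 1`). -/
theorem statement19 (k : Type*) [Field k]
    [Abelian C] [CategoryTheory.Linear k C] [MonoidalPreadditive C] [MonoidalLinear k C]
    [∀ X Y : C, FiniteDimensional k (X ⟶ Y)]
    (hC : SemisimpleCat k C) (hIC : IsSimpleObj k (𝟙_ C)) (P : Pivotal C)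
    (V W Z : C) (iV : V ⟶ Z) (iW : W ⟶ Z) (pV : Z ⟶ V) (pW : Z ⟶ W)
    (h1 : iV ≫ pV = 𝟙 V) (h2 : iW ≫ pW = 𝟙 W) (h3 : iV ≫ pW = 0) (h4 : iW ≫ pV = 0)
    (h5 : pV ≫ iV + pW ≫ iW = 𝟙 Z) (n : ℕ) :
    nu k P.j Z (n + 1) 1 = nu k P.j V (n + 1) 1 + nu k P.j W (n + 1) 1 := by
  have hred : ∀ X : C, nu k P.j X (n + 1) 1 = LinearMap.trace k _ (ENlin k P.j X n) := by
    intro X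
    simp [nu]
  have hVtr := trace_component k P.j iV pV h1 (P.naturality iV) n
  have hWtr := trace_component k P.j iW pW h2 (P.naturality iW) n
  have hone : pcE k (slotE (pV ≫ iV) (n + 1) 0) + pcE k (slotE (pW ≫ iW) (n + 1) 0)
      = (1 : Module.End k (𝟙_ C ⟶ pow Z (n + 1))) := by
    rw [← pcE_add]
    have h6 : slotE (pV ≫ iV) (n + 1) 0 + slotE (pW ≫ iW) (n + 1) 0 = 𝟙 (pow Z (n + 1)) := by
      show (pV ≫ iV) ▷ pow Z n + (pW ≫ iW) ▷ pow Z n = 𝟙 (pow Z (n + 1))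
      rw [← MonoidalPreadditive.add_whiskerRight, h5, id_whiskerRight]
      rfl
    rw [h6, pcE_id]
  have hsplit : ENlin k P.j Z n = ENlin k P.j Z n * pcE k (slotE (pV ≫ iV) (n + 1) 0)
      + ENlin k P.j Z n * pcE k (slotE (pW ≫ iW) (n + 1) 0) := by
    rw [← mul_add, hone, mul_one]
  rw [hred Z, hsplit, map_add, hVtr, hWtr, ← hred V, ← hred W]

end FSI
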